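/- arXiv:2603.02552 — 7 statements merged into one kernel-verified Lean document; each statement's English description precedes it below -/
import Mathlib

section
/- Let V : ℝ → M_{N×N}(ℂ) be differentiable with V(t)†·V(t) = I_N for all t, let L0 ∈ M_{N×K}(ℂ) satisfy L0†·L0 = I_K, and let h : ℝ → M_{K×K}(ℂ) be differentiable and satisfy the lift equation h'(t) = −(L0†·V(t)†·V'(t)·L0)·h(t) for all t. Then the curve L(t) = V(t)·L0·h(t) is horizontal: L(t)†·L'(t) = 0 for all t. -/
open Matrix

/-- If `h` solves the lift equation `h' = -(L0ᴴ Vᴴ V' L0) h` with `V` unitary and `L0`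
having orthonormal columns, then the curve `L(t) = V(t)·L0·h(t)` is horizontal:
`L(t)ᴴ · L'(t) = 0` for all `t`. -/
theorem lift_equation_gives_horizontal_curve {N K : ℕ} (hN : 0 < N) (hK : 0 < K)
    (V V' : ℝ → Matrix (Fin N) (Fin N) ℂ)
    (hV : ∀ t i j, HasDerivAt (fun s => V s i j) (V' t i j) t)
    (hVunit : ∀ t, (V t)ᴴ * V t = 1)
    (L0 : Matrix (Fin N) (Fin K) ℂ) (hL0 : L0ᴴ * L0 = 1)
    (h : ℝ → Matrix (Fin K) (Fin K) ℂ)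
    (hh : ∀ t i j, HasDerivAt (fun s => h s i j)
      ((-(L0ᴴ * (V t)ᴴ * V' t * L0) * h t) i j) t) :
    ∀ t : ℝ, ∃ L't : Matrix (Fin N) (Fin K) ℂ,
      (∀ i j, HasDerivAt (fun s => (V s * L0 * h s) i j) (L't i j) t) ∧
      (V t * L0 * h t)ᴴ * L't = 0 := by
  intro t
  set h' : Matrix (Fin K) (Fin K) ℂ := -(L0ᴴ * (V t)ᴴ * V' t * L0) * h t with hh'def
  refine ⟨V' t * L0 * h t + V t * L0 * h', ?_, ?_⟩
  · intro i j
    have key : ∀ s, (V s * L0 * h s) i j = ∑ k, (∑ m, V s i m * L0 m k) * h s k j := by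
      intro s; simp [Matrix.mul_apply]
    have key' : (V' t * L0 * h t + V t * L0 * h') i j
        = ∑ k, ((∑ m, V' t i m * L0 m k) * h t k j
            + (∑ m, V t i m * L0 m k) * h' k j) := by
      simp [Matrix.mul_apply, Finset.sum_add_distrib]
    rw [show (fun s => (V s * L0 * h s) i j)
        = fun s => ∑ k, (∑ m, V s i m * L0 m k) * h s k j from funext key, key']
    apply HasDerivAt.fun_sum
    intro k _
    exact ((HasDerivAt.fun_sum (fun m _ => (hV t i m).mul_const (L0 m k))).mul (hh t k j))
  · have hVV : (V t)ᴴ * V t = 1 := hVunit t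
    have expand : (V t * L0 * h t)ᴴ * (V' t * L0 * h t + V t * L0 * h')
        = (h t)ᴴ * (L0ᴴ * (V t)ᴴ * V' t * L0) * h t
          + (h t)ᴴ * (L0ᴴ * ((V t)ᴴ * V t) * L0) * h' := by
      simp only [conjTranspose_mul, Matrix.mul_add]
      simp [Matrix.mul_assoc]
    rw [expand, hVV, Matrix.mul_one, hL0, Matrix.mul_one, hh'def]
    simp [Matrix.mul_assoc]
end

section
/- Let H and X be Hermitian N×N complex matrices with H·X = −X·H, let ω, ω_H be real numbers, and define V(t) = exp(i·ω_H·t·H)·exp(i·ω·t·X) (matrix exponentials). Then V is differentiable and V(t)†·V'(t) = i·ω_H·H·exp(2i·ω·t·X) + i·ω·X for all t. -/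
open Matrix

section Aux

attribute [local instance] Matrix.linftyOpNormedRing Matrix.linftyOpNormedAlgebra
  Matrix.linftyOpNormedSpace

open NormedSpace

/-- If `a` anticommutes with `M`, then `a * exp M = exp (-M) * a`. -/
lemma semiconj_exp_of_anticommute {N : ℕ} (a M : Matrix (Fin N) (Fin N) ℂ)
    (h : a * M = -(M * a)) :
    a * exp M = exp (-M) * a := by
  have hpow : ∀ n : ℕ, a * M ^ n = (-M) ^ n * a := by
    intro n
    induction n with
    | zero => simp
    | succ n ih =>
        rw [pow_succ, pow_succ, ← mul_assoc, ih, mul_assoc, mul_assoc]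
        congr 1
        rw [h, neg_mul]
  have h1 : HasSum (fun n : ℕ => a * (((Nat.factorial n : ℂ))⁻¹ • M ^ n)) (a * exp M) :=
    (exp_series_hasSum_exp' (𝕂 := ℂ) M).mul_left a
  have hfun : (fun n : ℕ => (((Nat.factorial n : ℂ))⁻¹ • (-M) ^ n) * a)
      = fun n : ℕ => a * (((Nat.factorial n : ℂ))⁻¹ • M ^ n) := by
    funext n
    rw [smul_mul_assoc, ← hpow, mul_smul_comm]
  exact h1.unique (hfun ▸ (exp_series_hasSum_exp' (𝕂 := ℂ) (-M)).mul_right a)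

/-- Entry evaluation as a continuous `ℝ`-linear map (w.r.t. the linfty operator norm). -/
noncomputable def entryCLM {N : ℕ} (i j : Fin N) :
    Matrix (Fin N) (Fin N) ℂ →L[ℝ] ℂ :=
  LinearMap.toContinuousLinearMap
    ((LinearMap.proj j).comp (LinearMap.proj (R := ℝ)
      (φ := fun _ : Fin N => Fin N → ℂ) i))

lemma hasDerivAt_exp_aux {N : ℕ} (B : Matrix (Fin N) (Fin N) ℂ) (t : ℝ) :
    HasDerivAt (fun s : ℝ => exp (s • B)) (exp (t • B) * B) t := by
  have h := hasDerivAt_exp_smul_const (𝕂 := ℝ) B t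
  exact h

/-- For `V(t) = exp(i ω_H t H) · exp(i ω t X)` with `H, X` Hermitian and anticommuting,
`V` is differentiable and `V(t)ᴴ · V'(t) = i ω_H H exp(2 i ω t X) + i ω X`. -/
theorem path_derivative {N : ℕ} (hN : 0 < N)
    (H X : Matrix (Fin N) (Fin N) ℂ)
    (hHh : Hᴴ = H) (hXh : Xᴴ = X) (hHX : H * X = -(X * H))
    (ω ωH : ℝ)
    (V : ℝ → Matrix (Fin N) (Fin N) ℂ)
    (hV : ∀ t : ℝ, V t = NormedSpace.exp ((Complex.I * (ωH * t)) • H) *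
      NormedSpace.exp ((Complex.I * (ω * t)) • X)) :
    ∃ V' : ℝ → Matrix (Fin N) (Fin N) ℂ,
      (∀ t i j, HasDerivAt (fun s => V s i j) (V' t i j) t) ∧
      ∀ t : ℝ, (V t)ᴴ * V' t
        = (Complex.I * ωH) • (H * NormedSpace.exp ((2 * Complex.I * (ω * t)) • X))
          + (Complex.I * ω) • X := by
  set B : Matrix (Fin N) (Fin N) ℂ := (Complex.I * ωH) • H with hB
  set A : Matrix (Fin N) (Fin N) ℂ := (Complex.I * ω) • X with hA
  have hsmulB : ∀ t : ℝ, (Complex.I * (ωH * t)) • H = t • B := by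
    intro t
    rw [hB, ← smul_assoc, Complex.real_smul]
    congr 1
    push_cast
    ring
  have hsmulA : ∀ t : ℝ, (Complex.I * (ω * t)) • X = t • A := by
    intro t
    rw [hA, ← smul_assoc, Complex.real_smul]
    congr 1
    push_cast
    ring
  have hVeq : V = fun t => exp (t • B) * exp (t • A) := by
    funext t
    rw [hV t, hsmulB t, hsmulA t]
  set W : ℝ → Matrix (Fin N) (Fin N) ℂ := fun t =>
    exp (t • B) * B * exp (t • A) + exp (t • B) * (exp (t • A) * A) with hW
  have hVderiv : ∀ t : ℝ, HasDerivAt V (W t) t := by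
    intro t
    rw [hVeq]
    exact (hasDerivAt_exp_aux B t).mul (hasDerivAt_exp_aux A t)
  refine ⟨W, ?_, ?_⟩
  · intro t i j
    exact (entryCLM i j).hasFDerivAt.comp_hasDerivAt t (hVderiv t)
  · intro t
    have hAH : (t • A)ᴴ = -(t • A) := by
      rw [← hsmulA t, conjTranspose_smul, hXh, ← neg_smul]
      congr 1
      simp [Complex.ext_iff]
    have hBH : (t • B)ᴴ = -(t • B) := by
      rw [← hsmulB t, conjTranspose_smul, hHh, ← neg_smul]
      congr 1
      simp [Complex.ext_iff]
    set e₁ : Matrix (Fin N) (Fin N) ℂ := exp (t • A) with he₁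
    set e₁' : Matrix (Fin N) (Fin N) ℂ := exp (-(t • A)) with he₁'
    set e₂ : Matrix (Fin N) (Fin N) ℂ := exp (t • B) with he₂
    set e₂' : Matrix (Fin N) (Fin N) ℂ := exp (-(t • B)) with he₂'
    have hc1 : ∀ Z : Matrix (Fin N) (Fin N) ℂ, e₁' * (e₁ * Z) = Z := by
      intro Z
      rw [← mul_assoc, he₁, he₁',
        ← Matrix.exp_add_of_commute (-(t • A)) (t • A) ((Commute.refl _).neg_left),
        neg_add_cancel, exp_zero, one_mul]
    have hc2 : ∀ Z : Matrix (Fin N) (Fin N) ℂ, e₂' * (e₂ * Z) = Z := by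
      intro Z
      rw [← mul_assoc, he₂, he₂',
        ← Matrix.exp_add_of_commute (-(t • B)) (t • B) ((Commute.refl _).neg_left),
        neg_add_cancel, exp_zero, one_mul]
    have hanti : H * (t • A) = -((t • A) * H) := by
      rw [mul_smul_comm, smul_mul_assoc, hA, mul_smul_comm, smul_mul_assoc, hHX]
      simp
    have hsemi : H * e₁ = e₁' * H := semiconj_exp_of_anticommute H (t • A) hanti
    have hdouble : e₁ * e₁ = exp ((2 * Complex.I * (ω * t)) • X) := by
      have h2a : (2 * Complex.I * (ω * t)) • X = t • A + t • A := by
        rw [← hsmulA t, ← add_smul]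
        congr 1
        push_cast
        ring
      rw [h2a, Matrix.exp_add_of_commute (t • A) (t • A) (Commute.refl _), he₁]
    have hVH : (V t)ᴴ = e₁' * e₂' := by
      simp only [hVeq, conjTranspose_mul]
      rw [he₁', he₂', ← hAH, ← hBH, Matrix.exp_conjTranspose, Matrix.exp_conjTranspose]
    rw [hVH]
    simp only [hW, ← he₁, ← he₂]
    rw [mul_add]
    have hterm1 : e₁' * e₂' * (e₂ * B * e₁)
        = (Complex.I * ωH) • (H * exp ((2 * Complex.I * (ω * t)) • X)) := by
      rw [hB]
      simp only [mul_assoc, mul_smul_comm, smul_mul_assoc]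
      rw [hc2]
      rw [← mul_assoc, ← hsemi, mul_assoc, hdouble]
      simp only [mul_assoc]
    have hterm2 : e₁' * e₂' * (e₂ * (e₁ * A)) = (Complex.I * ω) • X := by
      rw [mul_assoc, hc2, hc1, hA]
    rw [hterm1, hterm2]

end Aux
end

section
/- (Instantaneous code state / explicit horizontal lift.) The curve L(t) = V(t)·exp(−i·θ̄(t)·H)·L0 satisfies L(t)†·L'(t) = 0 for all t (i.e., it is the horizontal lift of the rotated code-space curve), and its associated projector is L(t)·L(t)† = V(t)·P0·V(t)†. -/
open Matrix

namespace InstCodeAux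

open NormedSpace


variable {n : ℕ}

/-- Closed form for the exponential of a scalar multiple of an involution. -/
lemma exp_invol (M : Matrix (Fin n) (Fin n) ℂ) (hM : M * M = 1) (z : ℂ) :
    exp (z • M) = Complex.cosh z • (1 : Matrix (Fin n) (Fin n) ℂ) + Complex.sinh z • M := by
  letI : SeminormedRing (Matrix (Fin n) (Fin n) ℂ) := Matrix.linftyOpSemiNormedRing
  letI : NormedRing (Matrix (Fin n) (Fin n) ℂ) := Matrix.linftyOpNormedRing
  letI : NormedAlgebra ℂ (Matrix (Fin n) (Fin n) ℂ) := Matrix.linftyOpNormedAlgebra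
  have hpow_even : ∀ k : ℕ, M ^ (2 * k) = 1 := fun k => by
    rw [pow_mul, sq, hM, one_pow]
  have hpow_odd : ∀ k : ℕ, M ^ (2 * k + 1) = M := fun k => by
    rw [pow_succ, hpow_even, one_mul]
  have he : HasSum (fun k : ℕ => (z ^ (2*k) / ((2*k).factorial : ℂ)) • M ^ (2*k))
      (Complex.cosh z • (1 : Matrix (Fin n) (Fin n) ℂ)) := by
    have h := (Complex.hasSum_cosh z).smul_const (1 : Matrix (Fin n) (Fin n) ℂ)
    refine h.congr_fun fun k => ?_
    rw [hpow_even]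
  have ho : HasSum (fun k : ℕ => (z ^ (2*k+1) / ((2*k+1).factorial : ℂ)) • M ^ (2*k+1)) (Complex.sinh z • M) := by
    have h := (Complex.hasSum_sinh z).smul_const M
    refine h.congr_fun fun k => ?_
    rw [hpow_odd]
  have h : HasSum (fun p : ℕ => (z ^ p / (p.factorial : ℂ)) • M ^ p)
      (Complex.cosh z • (1 : Matrix (Fin n) (Fin n) ℂ) + Complex.sinh z • M) :=
    HasSum.even_add_odd he ho
  rw [exp_eq_tsum ℂ]
  refine Eq.trans (tsum_congr fun p => ?_) h.tsum_eq
  rw [smul_pow, smul_smul, mul_comm, ← div_eq_mul_inv]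



variable {n : ℕ}

lemma exp_smul_mul_of_anticomm (A B : Matrix (Fin n) (Fin n) ℂ)
    (hA2 : A * A = 1) (hABA : A * B * A = -B) (z : ℂ) :
    exp (z • B) * A = A * exp ((-z) • B) := by
  have hU : exp (z • B) = A * exp ((-z) • B) * A := by
    have h := Matrix.exp_units_conj
      (⟨A, A, hA2, hA2⟩ : (Matrix (Fin n) (Fin n) ℂ)ˣ) ((-z) • B)
    have h2 : A * ((-z) • B) * A = z • B := by
      rw [mul_smul_comm, smul_mul_assoc, hABA, smul_neg, neg_smul, neg_neg]
    rw [show ((⟨A, A, hA2, hA2⟩ : (Matrix (Fin n) (Fin n) ℂ)ˣ) : Matrix (Fin n) (Fin n) ℂ) = A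
      from rfl] at h
    rw [show (((⟨A, A, hA2, hA2⟩ : (Matrix (Fin n) (Fin n) ℂ)ˣ)⁻¹ :
      (Matrix (Fin n) (Fin n) ℂ)ˣ) : Matrix (Fin n) (Fin n) ℂ) = A from rfl] at h
    rw [h2] at h
    exact h
  rw [hU, mul_assoc, mul_assoc, hA2, mul_one]

lemma exp_smul_add_smul (B : Matrix (Fin n) (Fin n) ℂ) (z w : ℂ) :
    exp (z • B) * exp (w • B) = exp ((z + w) • B) := by
  rw [add_smul]
  exact (Matrix.exp_add_of_commute _ _ (((Commute.refl B).smul_left z).smul_right w)).symm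

lemma exp_smul_mul_exp_neg (B : Matrix (Fin n) (Fin n) ℂ) (z : ℂ) :
    exp (z • B) * exp ((-z) • B) = 1 := by
  rw [exp_smul_add_smul, add_neg_cancel, zero_smul, exp_zero]

lemma comm_exp {A B : Matrix (Fin n) (Fin n) ℂ} (h : A * B = B * A) (z : ℂ) :
    A * exp (z • B) = exp (z • B) * A := by
  letI : SeminormedRing (Matrix (Fin n) (Fin n) ℂ) := Matrix.linftyOpSemiNormedRing
  letI : NormedRing (Matrix (Fin n) (Fin n) ℂ) := Matrix.linftyOpNormedRing
  letI : NormedAlgebra ℂ (Matrix (Fin n) (Fin n) ℂ) := Matrix.linftyOpNormedAlgebra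
  have hc : Commute A B := h
  exact ((hc.smul_right z).exp_right)

lemma exp_smul_conjTranspose (B : Matrix (Fin n) (Fin n) ℂ) (hB : Bᴴ = B) (z : ℂ) :
    (exp (z • B))ᴴ = exp ((starRingEnd ℂ z) • B) := by
  rw [← Matrix.exp_conjTranspose, conjTranspose_smul, hB]
  rfl


lemma horizontal_key (H X P0 : Matrix (Fin n) (Fin n) ℂ)
    (hH2 : H * H = 1) (hX2 : X * X = 1) (hHX : H * X = -(X * H))
    (hHh : Hᴴ = H) (hXh : Xᴴ = X)
    (hP0 : P0 * P0 = P0) (hP0H : P0 * H = H * P0) (hPXP : P0 * X * P0 = 0)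
    (u1 u2 u3 z1 z2 z4 : ℂ)
    (h1 : starRingEnd ℂ u1 = -u1) (h2 : starRingEnd ℂ u2 = -u2)
    (h3 : starRingEnd ℂ u3 = -u3)
    (hcoef : z1 * Complex.cosh (2 * u2) + z4 = 0) :
    P0 * ((exp (u1 • H) * exp (u2 • X) * exp (u3 • H))ᴴ *
      ((exp (u1 • H) * (z1 • H) * exp (u2 • X)
        + exp (u1 • H) * (exp (u2 • X) * (z2 • X))) * exp (u3 • H)
       + exp (u1 • H) * exp (u2 • X) * (exp (u3 • H) * (z4 • H)))) * P0 = 0 := by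
  set E1 := exp (u1 • H) with hE1def
  set E2 := exp (u2 • X) with hE2def
  set E3 := exp (u3 • H) with hE3def
  set F1 := exp ((-u1) • H) with hF1def
  set F2 := exp ((-u2) • X) with hF2def
  set F3 := exp ((-u3) • H) with hF3def
  have hXHX : X * H * X = -H := by
    have : X * H = -(H * X) := by rw [hHX, neg_neg]
    rw [this, neg_mul, mul_assoc, hX2, mul_one]
  have hHXH : H * X * H = -X := by
    rw [hHX, neg_mul, mul_assoc, hH2, mul_one]
  -- conjugate transposes
  have hE1h : E1ᴴ = F1 := by rw [hE1def, exp_smul_conjTranspose _ hHh, h1]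
  have hE2h : E2ᴴ = F2 := by rw [hE2def, exp_smul_conjTranspose _ hXh, h2]
  have hE3h : E3ᴴ = F3 := by rw [hE3def, exp_smul_conjTranspose _ hHh, h3]
  -- cancellations
  have hF1E1 : F1 * E1 = 1 := by
    rw [hF1def, hE1def]; rw [show u1 • H = (-(-u1)) • H by rw [neg_neg]]
    exact exp_smul_mul_exp_neg H (-u1)
  have hF2E2 : F2 * E2 = 1 := by
    rw [hF2def, hE2def]; rw [show u2 • X = (-(-u2)) • X by rw [neg_neg]]
    exact exp_smul_mul_exp_neg X (-u2)
  have hF3E3 : F3 * E3 = 1 := by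
    rw [hF3def, hE3def]; rw [show u3 • H = (-(-u3)) • H by rw [neg_neg]]
    exact exp_smul_mul_exp_neg H (-u3)
  have cancel1 : ∀ Q : Matrix (Fin n) (Fin n) ℂ, F1 * (E1 * Q) = Q := fun Q => by
    rw [← mul_assoc, hF1E1, one_mul]
  have cancel2 : ∀ Q : Matrix (Fin n) (Fin n) ℂ, F2 * (E2 * Q) = Q := fun Q => by
    rw [← mul_assoc, hF2E2, one_mul]
  have cancel3 : ∀ Q : Matrix (Fin n) (Fin n) ℂ, F3 * (E3 * Q) = Q := fun Q => by
    rw [← mul_assoc, hF3E3, one_mul]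
  -- anticommutation moves
  have hHE2 : H * E2 = F2 * H := by
    have := exp_smul_mul_of_anticomm H X hH2 hHXH (-u2)
    rw [neg_neg] at this
    rw [hE2def, hF2def]
    exact this.symm
  have hXE3 : X * E3 = F3 * X := by
    have := exp_smul_mul_of_anticomm X H hX2 hXHX (-u3)
    rw [neg_neg] at this
    rw [hE3def, hF3def]
    exact this.symm
  have hHE3 : H * E3 = E3 * H := by
    rw [hE3def]; exact comm_exp rfl u3
  have moveH2 : ∀ Q : Matrix (Fin n) (Fin n) ℂ, H * (E2 * Q) = F2 * (H * Q) := fun Q => by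
    rw [← mul_assoc, hHE2, mul_assoc]
  have moveX3 : ∀ Q : Matrix (Fin n) (Fin n) ℂ, X * (E3 * Q) = F3 * (X * Q) := fun Q => by
    rw [← mul_assoc, hXE3, mul_assoc]
  have moveHE3 : ∀ Q : Matrix (Fin n) (Fin n) ℂ, H * (E3 * Q) = E3 * (H * Q) := fun Q => by
    rw [← mul_assoc, hHE3, mul_assoc]
  -- double products
  have hF2F2 : ∀ Q : Matrix (Fin n) (Fin n) ℂ, F2 * (F2 * Q) =
      Complex.cosh (2 * u2) • Q + Complex.sinh (-(2 * u2)) • (X * Q) := fun Q => by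
    rw [← mul_assoc, hF2def, exp_smul_add_smul, show -u2 + -u2 = -(2 * u2) by ring,
      exp_invol X hX2, show Complex.cosh (-(2*u2)) = Complex.cosh (2*u2) from Complex.cosh_neg _,
      add_mul, smul_mul_assoc, smul_mul_assoc, one_mul]
  have hF3F3 : ∀ Q : Matrix (Fin n) (Fin n) ℂ, F3 * (F3 * Q) =
      exp ((-(2 * u3)) • H) * Q := fun Q => by
    rw [← mul_assoc, hF3def, exp_smul_add_smul, show -u3 + -u3 = -(2 * u3) by ring]
  -- P0 moves
  have hP0G : ∀ Q : Matrix (Fin n) (Fin n) ℂ,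
      P0 * (exp ((-(2 * u3)) • H) * Q) = exp ((-(2 * u3)) • H) * (P0 * Q) := fun Q => by
    rw [← mul_assoc, comm_exp hP0H (-(2 * u3)), mul_assoc]
  have hXP : P0 * (X * P0) = 0 := by rw [← mul_assoc, hPXP]
  have hXHP : P0 * (X * (H * P0)) = 0 := by
    rw [show H * P0 = P0 * H from hP0H.symm, ← mul_assoc, ← mul_assoc, mul_assoc P0 X P0,
      ← mul_assoc, hPXP, zero_mul]
  have hPHP : P0 * (H * P0) = H * P0 := by
    rw [← mul_assoc, hP0H, mul_assoc, hP0, ]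
  -- main computation
  rw [conjTranspose_mul, conjTranspose_mul, hE1h, hE2h, hE3h]
  simp only [mul_add, add_mul, smul_mul_assoc, mul_smul_comm, mul_assoc, smul_add, smul_smul]
  simp only [cancel1, cancel2, cancel3, moveH2, moveX3, moveHE3]
  simp only [hF2F2, hF3F3, mul_add, smul_add, mul_smul_comm, smul_smul, cancel3, moveX3, hP0G]
  simp only [hXP, hXHP, hPHP, mul_zero, smul_zero, add_zero, zero_add]
  rw [← add_smul]
  rw [show z1 * Complex.cosh (2 * u2) + z4 = 0 from hcoef, zero_smul]

end InstCodeAux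

open InstCodeAux in
/-- Instantaneous code state / explicit horizontal lift: the curve
`L(t) = V(t)·exp(−i θ̄(t) H)·L0` is horizontal (`L(t)ᴴ·L'(t) = 0`) and its associated
projector is `L(t)·L(t)ᴴ = V(t)·P0·V(t)ᴴ`. -/
theorem instantaneous_code_state {N K : ℕ} (hN : 0 < N) (hK : 0 < K)
    (H X : Matrix (Fin N) (Fin N) ℂ)
    (hHh : Hᴴ = H) (hXh : Xᴴ = X)
    (hH2 : H * H = 1) (hX2 : X * X = 1) (hHX : H * X = -(X * H))
    (ω θ ωH : ℝ) (hω : 0 < ω) (hωH : ωH = θ * ω / (2 * Real.pi))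
    (θbar : ℝ → ℝ) (hθbar : ∀ t, θbar t = θ / (4 * Real.pi) * Real.sin (2 * ω * t))
    (V : ℝ → Matrix (Fin N) (Fin N) ℂ)
    (hV : ∀ t : ℝ, V t = NormedSpace.exp ((Complex.I * (ωH * t)) • H) *
      NormedSpace.exp ((Complex.I * (ω * t)) • X))
    (P0 : Matrix (Fin N) (Fin N) ℂ)
    (hP0proj : P0 * P0 = P0) (hP0herm : P0ᴴ = P0)
    (hP0H : P0 * H = H * P0) (hPXP : P0 * X * P0 = 0) (hPHXP : P0 * H * X * P0 = 0)
    (L0 : Matrix (Fin N) (Fin K) ℂ) (hL0 : L0ᴴ * L0 = 1) (hL0P : L0 * L0ᴴ = P0)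
    (L : ℝ → Matrix (Fin N) (Fin K) ℂ)
    (hL : ∀ t : ℝ, L t = V t *
      NormedSpace.exp ((-(Complex.I * (θbar t : ℝ))) • H) * L0) :
    (∀ t : ℝ, ∃ L't : Matrix (Fin N) (Fin K) ℂ,
      (∀ i j, HasDerivAt (fun s => L s i j) (L't i j) t) ∧ (L t)ᴴ * L't = 0) ∧
    (∀ t : ℝ, L t * (L t)ᴴ = V t * P0 * (V t)ᴴ) := by
  classical
  have hPL0 : P0 * L0 = L0 := by rw [← hL0P, Matrix.mul_assoc, hL0, Matrix.mul_one]
  have hL0P' : L0ᴴ * P0 = L0ᴴ := by rw [← hL0P, ← Matrix.mul_assoc, hL0, Matrix.one_mul]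
  -- scalar generators
  set A1 : Matrix (Fin N) (Fin N) ℂ := (Complex.I * (ωH : ℂ)) • H with hA1
  set A2 : Matrix (Fin N) (Fin N) ℂ := (Complex.I * (ω : ℂ)) • X with hA2
  set A3 : Matrix (Fin N) (Fin N) ℂ := (-Complex.I) • H with hA3
  have hs1 : ∀ s : ℝ, s • A1 = (Complex.I * ((ωH : ℂ) * (s : ℂ))) • H := fun s => by
    rw [hA1, ← smul_assoc]
    congr 1
    rw [Complex.real_smul]
    ring
  have hs2 : ∀ s : ℝ, s • A2 = (Complex.I * ((ω : ℂ) * (s : ℂ))) • X := fun s => by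
    rw [hA2, ← smul_assoc]
    congr 1
    rw [Complex.real_smul]
    ring
  have hs3 : ∀ s : ℝ, (θbar s) • A3 = (-(Complex.I * ((θbar s : ℝ) : ℂ))) • H := fun s => by
    rw [hA3, ← smul_assoc]
    congr 1
    rw [Complex.real_smul]
    ring
  set Mf : ℝ → Matrix (Fin N) (Fin N) ℂ := fun s =>
    NormedSpace.exp (s • A1) * NormedSpace.exp (s • A2) *
      NormedSpace.exp (θbar s • A3) with hMf
  have hMfapp : ∀ s : ℝ, Mf s = NormedSpace.exp (s • A1) * NormedSpace.exp (s • A2) *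
      NormedSpace.exp (θbar s • A3) := fun s => rfl
  have hMfV : ∀ s : ℝ, Mf s = V s *
      NormedSpace.exp ((-(Complex.I * ((θbar s : ℝ) : ℂ))) • H) := fun s => by
    rw [hMfapp s, hV s, hs1 s, hs2 s, hs3 s]
  have hLMf : ∀ s : ℝ, L s = Mf s * L0 := fun s => by
    rw [hL s, ← hMfV s]
  have him : ∀ r : ℝ, starRingEnd ℂ (Complex.I * (r : ℂ)) = -(Complex.I * (r : ℂ)) :=
    fun r => by simp
  constructor
  · -- horizontality
    intro t
    letI : SeminormedRing (Matrix (Fin N) (Fin N) ℂ) := Matrix.linftyOpSemiNormedRing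
    letI : NormedRing (Matrix (Fin N) (Fin N) ℂ) := Matrix.linftyOpNormedRing
    letI : NormedAlgebra ℝ (Matrix (Fin N) (Fin N) ℂ) := Matrix.linftyOpNormedAlgebra
    letI : NormedAlgebra ℂ (Matrix (Fin N) (Fin N) ℂ) := Matrix.linftyOpNormedAlgebra
    set d : ℝ := θ / (4 * Real.pi) * (Real.cos (2 * ω * t) * (2 * ω)) with hd
    -- derivative of θbar
    have h0 : HasDerivAt (fun s : ℝ => 2 * ω * s) (2 * ω) t := by
      simpa using (hasDerivAt_id t).const_mul (2 * ω)
    have h1 : HasDerivAt (fun s : ℝ => Real.sin (2 * ω * s)) (Real.cos (2 * ω * t) * (2 * ω)) t :=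
      (Real.hasDerivAt_sin (2 * ω * t)).comp t h0
    have hθ' : HasDerivAt θbar d t := by
      have h2 := h1.const_mul (θ / (4 * Real.pi))
      refine HasDerivAt.congr_of_eventuallyEq ?_ (Filter.Eventually.of_forall fun s => hθbar s)
      rw [hd]
      exact h2
    -- derivatives of exponentials
    have hD1 : HasDerivAt (fun s : ℝ => NormedSpace.exp (s • A1))
        (NormedSpace.exp (t • A1) * A1) t := by
      have h := hasDerivAt_exp_smul_const (𝕂 := ℝ) A1 t
      exact h
    have hD2 : HasDerivAt (fun s : ℝ => NormedSpace.exp (s • A2))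
        (NormedSpace.exp (t • A2) * A2) t := by
      have h := hasDerivAt_exp_smul_const (𝕂 := ℝ) A2 t
      exact h
    have hexp3 : HasDerivAt (fun u : ℝ => NormedSpace.exp (u • A3))
        (NormedSpace.exp (θbar t • A3) * A3) (θbar t) := by
      have h := hasDerivAt_exp_smul_const (𝕂 := ℝ) A3 (θbar t)
      exact h
    have hD3 : HasDerivAt (fun s : ℝ => NormedSpace.exp (θbar s • A3))
        (d • (NormedSpace.exp (θbar t • A3) * A3)) t :=
      HasDerivAt.scomp t hexp3 hθ'
    set DM : Matrix (Fin N) (Fin N) ℂ :=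
      ((NormedSpace.exp (t • A1) * A1) * NormedSpace.exp (t • A2) +
        NormedSpace.exp (t • A1) * (NormedSpace.exp (t • A2) * A2)) *
          NormedSpace.exp (θbar t • A3) +
        NormedSpace.exp (t • A1) * NormedSpace.exp (t • A2) *
          (d • (NormedSpace.exp (θbar t • A3) * A3)) with hDM
    have hM : HasDerivAt Mf DM t := by
      have h := (hD1.mul hD2).mul hD3
      exact h
    have hMentry : ∀ i k, HasDerivAt (fun s => Mf s i k) (DM i k) t := by
      intro i k
      let lm : Matrix (Fin N) (Fin N) ℂ →ₗ[ℝ] ℂ :=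
        { toFun := fun A => A i k
          map_add' := fun _ _ => rfl
          map_smul' := fun _ _ => rfl }
      exact (LinearMap.toContinuousLinearMap lm).hasFDerivAt.comp_hasDerivAt t hM
    refine ⟨DM * L0, ?_, ?_⟩
    · intro i j
      have hsum : HasDerivAt (fun s => ∑ k, Mf s i k * L0 k j) (∑ k, DM i k * L0 k j) t :=
        HasDerivAt.fun_sum fun k _ => (hMentry i k).mul_const (L0 k j)
      have hfe : (fun s => L s i j) = fun s => ∑ k, Mf s i k * L0 k j := by
        funext s
        rw [hLMf s, Matrix.mul_apply]
      rw [hfe, Matrix.mul_apply]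
      exact hsum
    · -- horizontality identity
      set u1 : ℂ := Complex.I * ((ωH : ℂ) * (t : ℂ)) with hu1
      set u2 : ℂ := Complex.I * ((ω : ℂ) * (t : ℂ)) with hu2
      set u3 : ℂ := -(Complex.I * ((θbar t : ℝ) : ℂ)) with hu3
      set z1 : ℂ := Complex.I * (ωH : ℂ) with hz1
      set z2 : ℂ := Complex.I * (ω : ℂ) with hz2
      set z4 : ℂ := (d : ℂ) * (-Complex.I) with hz4
      have him1 : starRingEnd ℂ u1 = -u1 := by
        rw [hu1, show Complex.I * ((ωH : ℂ) * (t : ℂ)) = Complex.I * ((ωH * t : ℝ) : ℂ) by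
          push_cast; ring]
        exact him _
      have him2 : starRingEnd ℂ u2 = -u2 := by
        rw [hu2, show Complex.I * ((ω : ℂ) * (t : ℂ)) = Complex.I * ((ω * t : ℝ) : ℂ) by
          push_cast; ring]
        exact him _
      have him3 : starRingEnd ℂ u3 = -u3 := by
        rw [hu3, map_neg, him]
      have hreal : ωH * Real.cos (2 * ω * t) = d := by
        rw [hωH, hd]
        field_simp
        ring
      have hcoef : z1 * Complex.cosh (2 * u2) + z4 = 0 := by
        have hch : Complex.cosh (2 * u2) = ((Real.cos (2 * ω * t) : ℝ) : ℂ) := by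
          rw [hu2, show (2 : ℂ) * (Complex.I * ((ω : ℂ) * (t : ℂ)))
            = ((2 * ω * t : ℝ) : ℂ) * Complex.I by push_cast; ring,
            Complex.cosh_mul_I, Complex.ofReal_cos]
        rw [hch, hz1, hz4, ← hreal]
        push_cast
        ring
      have hk := horizontal_key H X P0 hH2 hX2 hHX hHh hXh hP0proj hP0H hPXP
        u1 u2 u3 z1 z2 z4 him1 him2 him3 hcoef
      have hMt : Mf t = NormedSpace.exp (u1 • H) * NormedSpace.exp (u2 • X) *
          NormedSpace.exp (u3 • H) := by
        rw [hMfapp t, hs1 t, hs2 t, hs3 t]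
      have hthird : d • (NormedSpace.exp (u3 • H) * A3)
          = NormedSpace.exp (u3 • H) * (z4 • H) := by
        rw [hA3, hz4, mul_smul_comm, mul_smul_comm, ← smul_assoc]
        congr 1
      have hDMt : DM = (NormedSpace.exp (u1 • H) * (z1 • H) * NormedSpace.exp (u2 • X)
            + NormedSpace.exp (u1 • H) * (NormedSpace.exp (u2 • X) * (z2 • X))) *
              NormedSpace.exp (u3 • H)
          + NormedSpace.exp (u1 • H) * NormedSpace.exp (u2 • X) *
              (NormedSpace.exp (u3 • H) * (z4 • H)) := by
        rw [hDM, hs1 t, hs2 t, hs3 t, hthird]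
      have hQ : P0 * ((Mf t)ᴴ * DM) * P0 = 0 := by
        rw [hMt, hDMt]
        exact hk
      calc (L t)ᴴ * (DM * L0)
          = (L0ᴴ * (Mf t)ᴴ) * (DM * L0) := by rw [hLMf t, conjTranspose_mul]
        _ = (L0ᴴ * P0) * (((Mf t)ᴴ * DM) * (P0 * L0)) := by
            rw [hL0P', hPL0]
            simp only [Matrix.mul_assoc]
        _ = L0ᴴ * ((P0 * ((Mf t)ᴴ * DM) * P0) * L0) := by
            simp only [Matrix.mul_assoc]
        _ = 0 := by rw [hQ, Matrix.zero_mul, Matrix.mul_zero]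
  · -- projector identity
    intro t
    set c : ℂ := -(Complex.I * ((θbar t : ℝ) : ℂ)) with hc
    set E : Matrix (Fin N) (Fin N) ℂ := NormedSpace.exp (c • H) with hE
    have hEh : Eᴴ = NormedSpace.exp ((-c) • H) := by
      rw [hE, exp_smul_conjTranspose _ hHh]
      congr 2
      rw [hc, map_neg, him]
    have hEE : ∀ S : Matrix (Fin N) (Fin N) ℂ,
        E * (NormedSpace.exp ((-c) • H) * S) = S := fun S => by
      rw [← Matrix.mul_assoc, hE, exp_smul_mul_exp_neg, Matrix.one_mul]
    have hL0L0 : ∀ R : Matrix (Fin N) (Fin N) ℂ, L0 * (L0ᴴ * R) = P0 * R := fun R => by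
      rw [← Matrix.mul_assoc, hL0P]
    have hEP0 : ∀ S : Matrix (Fin N) (Fin N) ℂ, E * (P0 * S) = P0 * (E * S) := fun S => by
      rw [← Matrix.mul_assoc, hE, ← comm_exp hP0H c, Matrix.mul_assoc]
    calc L t * (L t)ᴴ
        = (V t * E * L0) * (L0ᴴ * (Eᴴ * (V t)ᴴ)) := by
          rw [hL t, conjTranspose_mul, conjTranspose_mul, hE]
      _ = V t * (E * (L0 * (L0ᴴ * (NormedSpace.exp ((-c) • H) * (V t)ᴴ)))) := by
          rw [hEh]
          simp only [Matrix.mul_assoc]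
      _ = V t * (P0 * (V t)ᴴ) := by
          rw [hL0L0, hEP0, hEE]
      _ = V t * P0 * (V t)ᴴ := by rw [Matrix.mul_assoc]
end

section
/- (Holonomy of the measurement-based gate.) Assume additionally that exp(2πi·X) = I. Then the horizontal lift L(t) = V(t)·exp(−i·θ̄(t)·H)·L0 of the loop of rotated code spaces satisfies L(T) = exp(iθH)·L0 at the final time T = 2π/ω; in particular, for every unit vector ψ̄ with P0·ψ̄ = ψ̄, the final state is exp(iθH)·ψ̄, so the holonomy acquired around the loop is the logical rotation exp(iθH). -/
open Matrix

/-- Holonomy of the measurement-based gate: if additionally `exp(2πi X) = 1`, the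
horizontal lift `L(t) = V(t)·exp(−i θ̄(t) H)·L0` of the loop of rotated code spaces
satisfies `L(T) = exp(iθH)·L0` at `T = 2π/ω`, and every unit vector `ψ̄` in the code
space (`P0·ψ̄ = ψ̄`) is mapped to the final state `exp(iθH)·ψ̄`: the holonomy is the
logical rotation `exp(iθH)`. -/
theorem measurement_based_holonomy {N K : ℕ} (hN : 0 < N) (hK : 0 < K)
    (H X : Matrix (Fin N) (Fin N) ℂ)
    (hHh : Hᴴ = H) (hXh : Xᴴ = X)
    (hH2 : H * H = 1) (hX2 : X * X = 1) (hHX : H * X = -(X * H))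
    (ω θ ωH T : ℝ) (hω : 0 < ω) (hωH : ωH = θ * ω / (2 * Real.pi))
    (hT : T = 2 * Real.pi / ω)
    (θbar : ℝ → ℝ) (hθbar : ∀ t, θbar t = θ / (4 * Real.pi) * Real.sin (2 * ω * t))
    (V : ℝ → Matrix (Fin N) (Fin N) ℂ)
    (hV : ∀ t : ℝ, V t = NormedSpace.exp ((Complex.I * (ωH * t)) • H) *
      NormedSpace.exp ((Complex.I * (ω * t)) • X))
    (P0 : Matrix (Fin N) (Fin N) ℂ)
    (hP0proj : P0 * P0 = P0) (hP0herm : P0ᴴ = P0)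
    (hP0H : P0 * H = H * P0) (hPXP : P0 * X * P0 = 0) (hPHXP : P0 * H * X * P0 = 0)
    (L0 : Matrix (Fin N) (Fin K) ℂ) (hL0 : L0ᴴ * L0 = 1) (hL0P : L0 * L0ᴴ = P0)
    (hloop : NormedSpace.exp ((((2 * Real.pi : ℝ) : ℂ) * Complex.I) • X) = 1)
    (L : ℝ → Matrix (Fin N) (Fin K) ℂ)
    (hL : ∀ t : ℝ, L t = V t *
      NormedSpace.exp ((-(Complex.I * (θbar t : ℝ))) • H) * L0) :
    L T = NormedSpace.exp ((Complex.I * (θ : ℝ)) • H) * L0 ∧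
    ∀ ψ : Fin N → ℂ, star ψ ⬝ᵥ ψ = 1 → P0 *ᵥ ψ = ψ →
      L T *ᵥ (L0ᴴ *ᵥ ψ) = NormedSpace.exp ((Complex.I * (θ : ℝ)) • H) *ᵥ ψ := by
  have hπ : (Real.pi : ℝ) ≠ 0 := Real.pi_ne_zero
  have hω' : ω ≠ 0 := ne_of_gt hω
  have h1 : ωH * T = θ := by rw [hωH, hT]; field_simp
  have h2 : ω * T = 2 * Real.pi := by rw [hT]; field_simp
  have h3 : θbar T = 0 := by
    rw [hθbar, hT]
    have h4 : 2 * ω * (2 * Real.pi / ω) = ((4 : ℤ) : ℝ) * Real.pi := by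
      push_cast; field_simp; ring
    rw [h4, Real.sin_int_mul_pi, mul_zero]
  have hLT : L T = NormedSpace.exp ((Complex.I * (θ : ℝ)) • H) * L0 := by
    rw [hL, hV, h3]
    have e1 : (Complex.I * ((ωH : ℂ) * (T : ℂ))) • H = (Complex.I * (θ : ℝ)) • H := by
      rw [← Complex.ofReal_mul, h1]
    have e2 : (Complex.I * ((ω : ℂ) * (T : ℂ))) • X
        = ((((2 * Real.pi : ℝ) : ℂ)) * Complex.I) • X := by
      rw [← Complex.ofReal_mul, h2, mul_comm]
    rw [e1, e2, hloop]
    simp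
  refine ⟨hLT, ?_⟩
  intro ψ hψ hP
  rw [hLT]
  rw [Matrix.mulVec_mulVec, Matrix.mul_assoc, hL0P]
  rw [← Matrix.mulVec_mulVec, hP]
end

section
/- (Rotated error, class-2 case.) Let E be an N×N complex matrix with E·H = −H·E and E·X = X·E. Then for all t the rotated error E(t) = U(t)†·E·U(t) decomposes as E(t) = cos(2ω_H t)·exp(2i·θ̄(t)·H)·E + sin(2ω_H t)·sin(2ωt)·E·X·H + i·sin(2ω_H t)·cos(2ωt)·exp(2i·θ̄(t)·H)·E·H. -/
open Matrix
section Aux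
variable {n : ℕ}

local notation "M" => Matrix (Fin n) (Fin n) ℂ

noncomputable def splitHom (A : M) (hA : A * A = 1) : ℂ × ℂ →ₐ[ℂ] M :=
  AlgHom.ofLinearMap
    ((LinearMap.fst ℂ ℂ ℂ).smulRight ((2⁻¹ : ℂ) • (1 + A)) +
      (LinearMap.snd ℂ ℂ ℂ).smulRight ((2⁻¹ : ℂ) • (1 - A)))
    (by
      simp only [LinearMap.add_apply, LinearMap.smulRight_apply, LinearMap.fst_apply,
        LinearMap.snd_apply, Prod.fst_one, Prod.snd_one, one_smul]
      module)
    (by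
      intro p q
      simp only [LinearMap.add_apply, LinearMap.smulRight_apply, LinearMap.fst_apply,
        LinearMap.snd_apply, Prod.fst_mul, Prod.snd_mul]
      rw [mul_add, add_mul, add_mul]
      simp only [smul_mul_assoc, mul_smul_comm, mul_add, add_mul, mul_one, one_mul, mul_sub,
        sub_mul, hA, smul_smul]
      match_scalars <;> ring)

lemma exp_smul_sq_one (A : M) (hA : A * A = 1) (z : ℂ) :
    NormedSpace.exp (z • A) = Complex.cosh z • (1 : M) + Complex.sinh z • A := by
  letI : SeminormedRing M := Matrix.linftyOpSemiNormedRing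
  letI : NormedRing M := Matrix.linftyOpNormedRing
  letI : NormedAlgebra ℂ M := Matrix.linftyOpNormedAlgebra
  have hcont : Continuous (splitHom A hA) :=
    (splitHom A hA).toLinearMap.continuous_of_finiteDimensional
  have hz : z • A = splitHom A hA (z, -z) := by
    simp only [splitHom, AlgHom.ofLinearMap_apply, LinearMap.add_apply,
      LinearMap.smulRight_apply, LinearMap.fst_apply, LinearMap.snd_apply]
    module
  rw [hz]
  erw [← NormedSpace.map_exp (splitHom A hA) hcont]
  have he : NormedSpace.exp ((z, -z) : ℂ × ℂ) = (Complex.exp z, Complex.exp (-z)) := by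
    ext
    · rw [Prod.fst_exp, ← Complex.exp_eq_exp_ℂ]
    · rw [Prod.snd_exp, ← Complex.exp_eq_exp_ℂ]
  rw [he]
  simp only [splitHom, AlgHom.ofLinearMap_apply, LinearMap.add_apply,
    LinearMap.smulRight_apply, LinearMap.fst_apply, LinearMap.snd_apply,
    Complex.cosh, Complex.sinh]
  match_scalars <;> ring

end Aux

section Aux2
variable {n : ℕ}
local notation "M" => Matrix (Fin n) (Fin n) ℂ

lemma exp_smul_add (A : M) (z w : ℂ) :
    NormedSpace.exp (z • A) * NormedSpace.exp (w • A) = NormedSpace.exp ((z + w) • A) := by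
  have h := Matrix.exp_add_of_commute (z • A) (w • A) (((Commute.refl A).smul_left z).smul_right w)
  rw [← add_smul] at h
  exact h.symm

lemma exp_smul_anticomm (A B : M) (hA : A * A = 1) (hBA : B * A = -(A * B)) (z : ℂ) :
    B * NormedSpace.exp (z • A) = NormedSpace.exp ((-z) • A) * B := by
  rw [exp_smul_sq_one A hA, exp_smul_sq_one A hA, Complex.cosh_neg, Complex.sinh_neg]
  simp only [mul_add, add_mul, mul_smul_comm, smul_mul_assoc, mul_one, one_mul, hBA,
    neg_smul, smul_neg, neg_mul]

lemma exp_smul_comm (A B : M) (hBA : B * A = A * B) (z : ℂ) :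
    B * NormedSpace.exp (z • A) = NormedSpace.exp (z • A) * B :=
  (((Commute.smul_right (hBA : Commute B A) z)).exp_right).eq

lemma exp_smul_conjT (A : M) (hAh : Aᴴ = A) (z : ℂ) :
    (NormedSpace.exp (z • A))ᴴ = NormedSpace.exp ((starRingEnd ℂ z) • A) := by
  rw [← Matrix.exp_conjTranspose, Matrix.conjTranspose_smul, hAh]
  rfl

end Aux2

lemma main_calc {n : ℕ} (H X E : Matrix (Fin n) (Fin n) ℂ)
    (hHh : Hᴴ = H) (hXh : Xᴴ = X) (hH2 : H * H = 1) (hX2 : X * X = 1)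
    (hHX : H * X = -(X * H)) (hEH : E * H = -(H * E)) (hEX : E * X = X * E) (r1 r2 r3 : ℝ) :
    (NormedSpace.exp ((Complex.I * ↑r1) • H) * NormedSpace.exp ((Complex.I * ↑r2) • X) *
        NormedSpace.exp ((-(Complex.I * ↑r3)) • H))ᴴ * E *
      (NormedSpace.exp ((Complex.I * ↑r1) • H) * NormedSpace.exp ((Complex.I * ↑r2) • X) *
        NormedSpace.exp ((-(Complex.I * ↑r3)) • H))
    = ((Real.cos (2 * r1) : ℝ) : ℂ) • (NormedSpace.exp ((2 * Complex.I * ↑r3) • H) * E)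
      + ((Real.sin (2 * r1) * Real.sin (2 * r2) : ℝ) : ℂ) • (E * X * H)
      + (Complex.I * ((Real.sin (2 * r1) * Real.cos (2 * r2) : ℝ) : ℂ)) •
          (NormedSpace.exp ((2 * Complex.I * ↑r3) • H) * E * H) := by
  have hXH : X * H = -(H * X) := by rw [hHX, neg_neg]
  have hHE : H * E = -(E * H) := by rw [hEH, neg_neg]
  -- chain-form commutation rules
  have pEH : ∀ (z : ℂ) (m : Matrix (Fin n) (Fin n) ℂ),
      E * (NormedSpace.exp (z • H) * m) = NormedSpace.exp ((-z) • H) * (E * m) := by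
    intro z m; rw [← mul_assoc, exp_smul_anticomm H E hH2 hEH, mul_assoc]
  have pEX : ∀ (z : ℂ) (m : Matrix (Fin n) (Fin n) ℂ),
      E * (NormedSpace.exp (z • X) * m) = NormedSpace.exp (z • X) * (E * m) := by
    intro z m; rw [← mul_assoc, exp_smul_comm X E hEX, mul_assoc]
  have pHX : ∀ (z : ℂ) (m : Matrix (Fin n) (Fin n) ℂ),
      H * (NormedSpace.exp (z • X) * m) = NormedSpace.exp ((-z) • X) * (H * m) := by
    intro z m; rw [← mul_assoc, exp_smul_anticomm X H hX2 hHX, mul_assoc]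
  have pXH : ∀ (z : ℂ) (m : Matrix (Fin n) (Fin n) ℂ),
      X * (NormedSpace.exp (z • H) * m) = NormedSpace.exp ((-z) • H) * (X * m) := by
    intro z m; rw [← mul_assoc, exp_smul_anticomm H X hH2 hXH, mul_assoc]
  have pHH : ∀ (z : ℂ) (m : Matrix (Fin n) (Fin n) ℂ),
      H * (NormedSpace.exp (z • H) * m) = NormedSpace.exp (z • H) * (H * m) := by
    intro z m; rw [← mul_assoc, exp_smul_comm H H rfl, mul_assoc]
  have pee : ∀ (z w : ℂ) (m : Matrix (Fin n) (Fin n) ℂ),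
      NormedSpace.exp (z • H) * (NormedSpace.exp (w • H) * m)
        = NormedSpace.exp ((z + w) • H) * m := by
    intro z w m; rw [← mul_assoc, exp_smul_add]
  have pxx : ∀ (z w : ℂ) (m : Matrix (Fin n) (Fin n) ℂ),
      NormedSpace.exp (z • X) * (NormedSpace.exp (w • X) * m)
        = NormedSpace.exp ((z + w) • X) * m := by
    intro z w m; rw [← mul_assoc, exp_smul_add]
  -- conjugate transpose
  rw [conjTranspose_mul, conjTranspose_mul, exp_smul_conjT H hHh, exp_smul_conjT X hXh,
    exp_smul_conjT H hHh]
  have hst : ∀ r : ℝ, (starRingEnd ℂ) (Complex.I * (r : ℂ)) = -(Complex.I * (r : ℂ)) := by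
    intro r; simp [Complex.ext_iff]
  simp only [map_neg, hst, neg_neg]
  simp only [mul_assoc]
  rw [pEH (Complex.I * (r1 : ℂ)), pEX (Complex.I * (r2 : ℂ)),
    exp_smul_anticomm H E hH2 hEH (-(Complex.I * (r3 : ℂ)))]
  simp only [neg_neg]
  rw [pee (-(Complex.I * (r1 : ℂ))) (-(Complex.I * (r1 : ℂ)))]
  rw [exp_smul_sq_one H hH2 ((-(Complex.I * (r1 : ℂ))) + (-(Complex.I * (r1 : ℂ))))]
  simp only [add_mul, smul_mul_assoc, one_mul, mul_add, mul_smul_comm]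
  rw [pxx (-(Complex.I * (r2 : ℂ))) (Complex.I * (r2 : ℂ))]
  simp only [neg_add_cancel, zero_smul, NormedSpace.exp_zero, one_mul]
  rw [pHX (Complex.I * (r2 : ℂ)), pxx (-(Complex.I * (r2 : ℂ))) (-(Complex.I * (r2 : ℂ))),
    pHH (Complex.I * (r3 : ℂ))]
  rw [pee (Complex.I * (r3 : ℂ)) (Complex.I * (r3 : ℂ))]
  rw [exp_smul_sq_one X hX2 ((-(Complex.I * (r2 : ℂ))) + (-(Complex.I * (r2 : ℂ))))]
  simp only [add_mul, smul_mul_assoc, one_mul, mul_add, mul_smul_comm]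
  rw [pXH (Complex.I * (r3 : ℂ)), pee (Complex.I * (r3 : ℂ)) (-(Complex.I * (r3 : ℂ))),
    pee (Complex.I * (r3 : ℂ)) (Complex.I * (r3 : ℂ))]
  simp only [add_neg_cancel, zero_smul, NormedSpace.exp_zero, one_mul]
  have harg : Complex.I * (r3 : ℂ) + Complex.I * (r3 : ℂ) = 2 * (Complex.I * (r3 : ℂ)) := by ring
  have harg1 : -(Complex.I * (r1 : ℂ)) + -(Complex.I * (r1 : ℂ)) = -(((2 * r1 : ℝ) : ℂ) * Complex.I) := by
    push_cast; ring
  have harg2 : -(Complex.I * (r2 : ℂ)) + -(Complex.I * (r2 : ℂ)) = -(((2 * r2 : ℝ) : ℂ) * Complex.I) := by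
    push_cast; ring
  have hc1 : Complex.cosh (-(Complex.I * (r1 : ℂ)) + -(Complex.I * (r1 : ℂ)))
      = ((Real.cos (2 * r1) : ℝ) : ℂ) := by
    rw [harg1, Complex.cosh_neg, Complex.cosh_mul_I, ← Complex.ofReal_cos]
  have hs1 : Complex.sinh (-(Complex.I * (r1 : ℂ)) + -(Complex.I * (r1 : ℂ)))
      = -(((Real.sin (2 * r1) : ℝ) : ℂ) * Complex.I) := by
    rw [harg1, Complex.sinh_neg, Complex.sinh_mul_I, ← Complex.ofReal_sin]
  have hc2 : Complex.cosh (-(Complex.I * (r2 : ℂ)) + -(Complex.I * (r2 : ℂ)))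
      = ((Real.cos (2 * r2) : ℝ) : ℂ) := by
    rw [harg2, Complex.cosh_neg, Complex.cosh_mul_I, ← Complex.ofReal_cos]
  have hs2 : Complex.sinh (-(Complex.I * (r2 : ℂ)) + -(Complex.I * (r2 : ℂ)))
      = -(((Real.sin (2 * r2) : ℝ) : ℂ) * Complex.I) := by
    rw [harg2, Complex.sinh_neg, Complex.sinh_mul_I, ← Complex.ofReal_sin]
  have hEXH : E * (X * H) = -(X * (H * E)) := by
    rw [← mul_assoc, hEX, mul_assoc, hEH, mul_neg]
  rw [harg, hc1, hs1, hc2, hs2, hEXH, hEH]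
  simp only [mul_neg]
  push_cast
  match_scalars <;> (try (ring_nf; simp only [Complex.I_sq])) <;> try ring
/-- Rotated error, class-2 case: for `E` anticommuting with `H` and commuting with `X`,
the rotated error `E(t) = U(t)ᴴ·E·U(t)` decomposes as
`cos(2ω_H t)·exp(2i θ̄(t) H)·E + sin(2ω_H t)·sin(2ωt)·E·X·H
  + i·sin(2ω_H t)·cos(2ωt)·exp(2i θ̄(t) H)·E·H`. -/
theorem rotated_error_class2 {N : ℕ} (hN : 0 < N)
    (H X : Matrix (Fin N) (Fin N) ℂ)
    (hHh : Hᴴ = H) (hXh : Xᴴ = X)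
    (hH2 : H * H = 1) (hX2 : X * X = 1) (hHX : H * X = -(X * H))
    (ω θ ωH : ℝ) (hω : 0 < ω) (hωH : ωH = θ * ω / (2 * Real.pi))
    (θbar : ℝ → ℝ) (hθbar : ∀ t, θbar t = θ / (4 * Real.pi) * Real.sin (2 * ω * t))
    (V U : ℝ → Matrix (Fin N) (Fin N) ℂ)
    (hV : ∀ t : ℝ, V t = NormedSpace.exp ((Complex.I * (ωH * t)) • H) *
      NormedSpace.exp ((Complex.I * (ω * t)) • X))
    (hU : ∀ t : ℝ, U t = V t * NormedSpace.exp ((-(Complex.I * (θbar t : ℝ))) • H))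
    (E : Matrix (Fin N) (Fin N) ℂ)
    (hEH : E * H = -(H * E)) (hEX : E * X = X * E)
    (Et : ℝ → Matrix (Fin N) (Fin N) ℂ)
    (hEt : ∀ t : ℝ, Et t = (U t)ᴴ * E * U t) :
    ∀ t : ℝ, Et t
      = ((Real.cos (2 * ωH * t) : ℝ) : ℂ) •
          (NormedSpace.exp ((2 * Complex.I * (θbar t : ℝ)) • H) * E)
        + ((Real.sin (2 * ωH * t) * Real.sin (2 * ω * t) : ℝ) : ℂ) • (E * X * H)
        + (Complex.I * ((Real.sin (2 * ωH * t) * Real.cos (2 * ω * t) : ℝ) : ℂ)) •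
          (NormedSpace.exp ((2 * Complex.I * (θbar t : ℝ)) • H) * E * H) := by
  intro t
  rw [hEt, hU, hV]
  have h := main_calc H X E hHh hXh hH2 hX2 hHX hEH hEX (ωH * t) (ω * t) (θbar t)
  push_cast at h ⊢
  ring_nf at h ⊢
  exact h
end

section
/- (Projection probability, class-2 case.) Let E be a Hermitian N×N matrix with E² = I, E·H = −H·E and E·X = X·E, and let ψ̄ be a unit vector with P0·ψ̄ = ψ̄. Then for all t, the probability of projecting the rotated error state onto the E-syndrome space satisfies ⟨E(t)·ψ̄, (E·P0·E)·E(t)·ψ̄⟩ = 1 − sin²(2ω_H t)·sin²(2ωt), where E(t) = U(t)†·E·U(t). -/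
open Matrix NormedSpace

section eM
variable {n : Type*} [Fintype n] [DecidableEq n]

/-- cos a • 1 + i sin a • A, the "rotation" generated by an involution A. -/
noncomputable def eMat (A : Matrix n n ℂ) (a : ℝ) : Matrix n n ℂ :=
  (Real.cos a : ℂ) • 1 + (Complex.I * (Real.sin a : ℂ)) • A

variable {A B : Matrix n n ℂ}

theorem eMat_zero : eMat A 0 = 1 := by
  simp [eMat]

theorem eMat_mul (hA : A * A = 1) (x y : ℝ) :
    eMat A x * eMat A y = eMat A (x + y) := by
  simp only [eMat, add_mul, mul_add, smul_mul_assoc, mul_smul_comm, one_mul, mul_one, hA,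
    smul_smul, Real.cos_add, Real.sin_add, Complex.ofReal_mul, Complex.ofReal_sub,
    Complex.ofReal_add]
  match_scalars
  · push_cast
    linear_combination (Complex.I_mul_I) * (Complex.sin (x:ℂ) * Complex.sin (y:ℂ))
  · push_cast
    ring

theorem eMat_mul_self_comm (x : ℝ) : eMat A x * A = A * eMat A x := by
  simp only [eMat, add_mul, mul_add, smul_mul_assoc, mul_smul_comm, one_mul, mul_one]

theorem eMat_anti (h : A * B = -(B * A)) (x : ℝ) :
    eMat A x * B = B * eMat A (-x) := by
  simp only [eMat, add_mul, mul_add, smul_mul_assoc, mul_smul_comm, one_mul, mul_one,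
    Real.cos_neg, Real.sin_neg, Complex.ofReal_neg, h]
  match_scalars <;> ring

theorem eMat_commm (h : A * B = B * A) (x : ℝ) :
    eMat A x * B = B * eMat A x := by
  simp only [eMat, add_mul, mul_add, smul_mul_assoc, mul_smul_comm, one_mul, mul_one, h]

theorem eMat_conjT (hA : Aᴴ = A) (x : ℝ) : (eMat A x)ᴴ = eMat A (-x) := by
  have h1 : (starRingEnd ℂ) ((Real.cos x : ℂ)) = ((Real.cos (-x) : ℂ)) := by
    rw [Real.cos_neg, Complex.conj_ofReal]
  have h2 : (starRingEnd ℂ) (Complex.I * (Real.sin x : ℂ)) = Complex.I * ((Real.sin (-x) : ℂ)) := by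
    rw [_root_.map_mul, Complex.conj_I, Complex.conj_ofReal, Real.sin_neg]
    push_cast
    ring
  simp only [eMat, conjTranspose_add, conjTranspose_smul, conjTranspose_one, hA, Complex.star_def, h1, h2]

end eM

theorem exp_smul_of_sq_eq_one {A : Type*} [NormedRing A] [NormedAlgebra ℂ A]
    [CompleteSpace A] {M : A} (hM : M * M = 1) (r : ℝ) :
    exp ((Complex.I * (r : ℂ)) • M)
      = ((Real.cos r : ℂ)) • (1 : A) + (Complex.I * (Real.sin r : ℂ)) • M := by
  rw [exp_eq_tsum (𝕂 := ℂ)]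
  refine HasSum.tsum_eq ?_
  have hM2 : ∀ k : ℕ, M ^ (2 * k) = 1 := fun k => by
    rw [pow_mul, sq, hM, one_pow]
  have hIe : ∀ k : ℕ, (Complex.I * (r:ℂ)) ^ (2 * k) = (-1)^k * (r:ℂ)^(2*k) := by
    intro k
    rw [mul_pow, pow_mul Complex.I, Complex.I_sq]
  have hIo : ∀ k : ℕ, (Complex.I * (r:ℂ)) ^ (2 * k + 1)
      = Complex.I * ((-1)^k * (r:ℂ)^(2*k+1)) := by
    intro k
    rw [pow_succ, mul_pow, pow_mul Complex.I, Complex.I_sq]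
    ring
  refine HasSum.even_add_odd ?_ ?_
  · have h := (Complex.hasSum_cos (r : ℂ)).smul_const (1 : A)
    rw [Complex.ofReal_cos]
    convert h using 2 with k
    rw [smul_pow, hM2, smul_smul, hIe]
    congr 1
    ring
  · have h := ((Complex.hasSum_sin (r : ℂ)).mul_left Complex.I).smul_const M
    rw [Complex.ofReal_sin]
    convert h using 2 with k
    rw [smul_pow, hIo, pow_succ M, hM2, one_mul, smul_smul]
    congr 1
    ring

theorem matrix_exp_eq {N : ℕ} {A : Matrix (Fin N) (Fin N) ℂ} (hA : A * A = 1) (r : ℝ) :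
    exp ((Complex.I * (r : ℂ)) • A) = eMat A r := by
  letI : SeminormedRing (Matrix (Fin N) (Fin N) ℂ) := Matrix.linftyOpSemiNormedRing
  letI : NormedRing (Matrix (Fin N) (Fin N) ℂ) := Matrix.linftyOpNormedRing
  letI : NormedAlgebra ℂ (Matrix (Fin N) (Fin N) ℂ) := Matrix.linftyOpNormedAlgebra
  exact exp_smul_of_sq_eq_one hA r

theorem mul_chain {n : Type*} [Fintype n] [DecidableEq n] {X Y Z : Matrix n n ℂ}
    (h : X * Y = Z) (w : Matrix n n ℂ) : w * X * Y = w * Z := by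
  rw [mul_assoc, h]

theorem mul_chain2 {n : Type*} [Fintype n] [DecidableEq n] {X Y Z W : Matrix n n ℂ}
    (h : X * Y = Z * W) (v : Matrix n n ℂ) : v * X * Y = v * Z * W := by
  rw [mul_assoc, h, ← mul_assoc]

/-- Projection probability, class-2 case: with `E` Hermitian, `E² = 1`, `{E,H} = 0`,
`[E,X] = 0`, and `ψ̄` a unit code vector, the probability of projecting the rotated
error state onto the `E`-syndrome space is
`⟨E(t)ψ̄, (E·P0·E)·E(t)ψ̄⟩ = 1 − sin²(2ω_H t)·sin²(2ωt)`. -/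
theorem projection_probability_class2 {N : ℕ} (hN : 0 < N)
    (H X : Matrix (Fin N) (Fin N) ℂ)
    (hHh : Hᴴ = H) (hXh : Xᴴ = X)
    (hH2 : H * H = 1) (hX2 : X * X = 1) (hHX : H * X = -(X * H))
    (ω θ ωH : ℝ) (hω : 0 < ω) (hωH : ωH = θ * ω / (2 * Real.pi))
    (θbar : ℝ → ℝ) (hθbar : ∀ t, θbar t = θ / (4 * Real.pi) * Real.sin (2 * ω * t))
    (V U : ℝ → Matrix (Fin N) (Fin N) ℂ)
    (hV : ∀ t : ℝ, V t = NormedSpace.exp ((Complex.I * (ωH * t)) • H) *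
      NormedSpace.exp ((Complex.I * (ω * t)) • X))
    (hU : ∀ t : ℝ, U t = V t * NormedSpace.exp ((-(Complex.I * (θbar t : ℝ))) • H))
    (P0 : Matrix (Fin N) (Fin N) ℂ)
    (hP0proj : P0 * P0 = P0) (hP0herm : P0ᴴ = P0)
    (hP0H : P0 * H = H * P0) (hPXP : P0 * X * P0 = 0) (hPHXP : P0 * H * X * P0 = 0)
    (E : Matrix (Fin N) (Fin N) ℂ)
    (hEh : Eᴴ = E) (hE2 : E * E = 1)
    (hEH : E * H = -(H * E)) (hEX : E * X = X * E)
    (Et : ℝ → Matrix (Fin N) (Fin N) ℂ)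
    (hEt : ∀ t : ℝ, Et t = (U t)ᴴ * E * U t)
    (ψ : Fin N → ℂ) (hψ : star ψ ⬝ᵥ ψ = 1) (hPψ : P0 *ᵥ ψ = ψ) :
    ∀ t : ℝ,
      star (Et t *ᵥ ψ) ⬝ᵥ ((E * P0 * E) *ᵥ (Et t *ᵥ ψ))
        = ((1 - Real.sin (2 * ωH * t) ^ 2 * Real.sin (2 * ω * t) ^ 2 : ℝ) : ℂ) := by
  intro t
  have hha : H * E = -(E * H) := by rw [hEH, neg_neg]
  have hxh : X * H = -(H * X) := by rw [hHX, neg_neg]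
  have hUt : U t = eMat H (ωH * t) * eMat X (ω * t) * eMat H (-(θbar t)) := by
    rw [hU t, hV t]
    have e1 : (Complex.I * (ωH * t) : ℂ) = Complex.I * ((ωH * t : ℝ) : ℂ) := by
      push_cast; ring
    have e2 : (Complex.I * (ω * t) : ℂ) = Complex.I * ((ω * t : ℝ) : ℂ) := by
      push_cast; ring
    have e3 : (-(Complex.I * ((θbar t : ℝ) : ℂ)) : ℂ) = Complex.I * ((-(θbar t) : ℝ) : ℂ) := by
      push_cast; ring
    rw [e1, e2, e3, matrix_exp_eq hH2, matrix_exp_eq hX2, matrix_exp_eq hH2]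
  set α := ωH * t with hαdef
  set β := ω * t with hβdef
  set γ := θbar t with hγdef
  set a := eMat H α with ha
  set b := eMat X β with hb
  set c := eMat H (-γ) with hc
  set a' := eMat H (-α) with ha'
  set b' := eMat X (-β) with hb'
  set c' := eMat H γ with hc'
  have hUtH : (U t)ᴴ = c' * b' * a' := by
    rw [hUt, conjTranspose_mul, conjTranspose_mul,
      eMat_conjT hHh, eMat_conjT hXh, eMat_conjT hHh, neg_neg, ← mul_assoc]
  have e_aE : a' * E = E * a := by
    have h' := eMat_anti hha (-α); rwa [neg_neg] at h'
  have e_bE : b' * E = E * b' := eMat_commm hEX.symm (-β)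
  have e_cE : c' * E = E * c := eMat_anti hha γ
  have e_aa : a * a = eMat H (α + α) := eMat_mul hH2 α α
  have e_bb : b * b = eMat X (β + β) := eMat_mul hX2 β β
  have e_b'b : b' * b = 1 := by
    have h' := eMat_mul hX2 (-β) β
    rwa [neg_add_cancel, eMat_zero] at h'
  have e_cc : c * c = eMat H (-γ + -γ) := eMat_mul hH2 _ _
  have e_b'H : b' * H = H * b := by
    have h' := eMat_anti hxh (-β); rwa [neg_neg] at h'
  have e_cH : c * H = H * c := eMat_mul_self_comm (-γ)
  have e_cX : c * X = X * c' := by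
    have h' := eMat_anti hHX (-γ); rwa [neg_neg] at h'
  have e_c'c : c' * c = 1 := by
    have h' := eMat_mul hH2 γ (-γ)
    rwa [add_neg_cancel, eMat_zero] at h'
  have hM : E * (U t)ᴴ * E * U t = c * b' * eMat H (α + α) * b * c := by
    rw [hUtH, hUt]
    simp only [← mul_assoc]
    rw [mul_chain2 e_aE, mul_chain2 e_bE, mul_chain2 e_cE, hE2, one_mul, mul_chain e_aa]
  set p : ℂ := ((Real.cos (α + α) : ℝ) : ℂ) with hp
  set q : ℂ := Complex.I * ((Real.sin (α + α) : ℝ) : ℂ) with hq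
  set p2 : ℂ := ((Real.cos (β + β) : ℝ) : ℂ) with hp2
  set q2 : ℂ := Complex.I * ((Real.sin (β + β) : ℝ) : ℂ) with hq2
  set G2 := eMat H (-γ + -γ) with hG2
  set G2' := eMat H (γ + γ) with hG2'
  have h1 : c * b' * b * c = G2 := by
    rw [mul_chain e_b'b, mul_one, e_cc]
  have h2 : c * b' * H * b * c = p2 • (H * G2) + q2 • (H * X) := by
    rw [mul_chain2 e_b'H, e_cH, mul_chain e_bb]
    rw [show eMat X (β + β) = p2 • (1 : Matrix (Fin N) (Fin N) ℂ) + q2 • X by rw [hp2, hq2]; rfl]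
    simp only [mul_add, add_mul, mul_smul_comm, smul_mul_assoc, mul_one]
    congr 1
    · rw [mul_chain e_cc]
    · rw [mul_chain2 e_cX, mul_chain e_c'c, mul_one]
  have hM2 : E * (U t)ᴴ * E * U t = p • G2 + (q * p2) • (H * G2) + (q * q2) • (H * X) := by
    rw [hM]
    rw [show eMat H (α + α) = p • (1 : Matrix (Fin N) (Fin N) ℂ) + q • H by rw [hp, hq]; rfl]
    simp only [mul_add, add_mul, mul_smul_comm, smul_mul_assoc, mul_one]
    rw [h1, h2, smul_add, smul_smul, smul_smul, ← add_assoc]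
  set D := p • G2 + (q * p2) • (H * G2) with hD
  have e_PG : P0 * G2 = G2 * P0 := (eMat_commm hP0H.symm _).symm
  have hK : P0 * (E * (U t)ᴴ * E * U t) * P0 = D * P0 := by
    rw [hM2]
    have t1 : P0 * G2 * P0 = G2 * P0 := by
      rw [e_PG, mul_assoc, hP0proj]
    have t2 : P0 * (H * G2) * P0 = H * G2 * P0 := by
      rw [← mul_assoc, hP0H, mul_chain2 e_PG, mul_assoc (H * G2), hP0proj]
    have t3 : P0 * (H * X) * P0 = 0 := by
      rw [← mul_assoc]; exact hPHXP
    simp only [mul_add, add_mul, mul_smul_comm, smul_mul_assoc]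
    rw [t3, smul_zero, add_zero, hD]
    simp only [mul_add, add_mul, mul_smul_comm, smul_mul_assoc]
    rw [t1, t2]
  have hDH : Dᴴ = p • G2' + (-(q * p2)) • (G2' * H) := by
    have hGH : G2ᴴ = G2' := by
      rw [hG2, eMat_conjT hHh, hG2']
      congr 1
      ring
    have hs1 : star p = p := by rw [hp, Complex.star_def, Complex.conj_ofReal]
    have hs2 : star (q * p2) = -(q * p2) := by
      rw [hq, hp2, Complex.star_def, _root_.map_mul, _root_.map_mul, Complex.conj_I, Complex.conj_ofReal,
        Complex.conj_ofReal]
      ring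
    rw [hD, conjTranspose_add, conjTranspose_smul, conjTranspose_smul, conjTranspose_mul,
      hGH, hHh, hs1, hs2]
  set lam : ℂ := p * p - (q * p2) * (q * p2) with hlam
  have hDD : Dᴴ * D = lam • (1 : Matrix (Fin N) (Fin N) ℂ) := by
    have f1 : G2' * G2 = 1 := by
      have h' := eMat_mul hH2 (γ + γ) (-γ + -γ)
      rw [show (γ + γ) + (-γ + -γ) = 0 by ring, eMat_zero] at h'
      rw [hG2', hG2, h']
    have e_G2'H : G2' * H = H * G2' := eMat_mul_self_comm (γ + γ)
    have f2 : G2' * (H * G2) = H := by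
      rw [← mul_assoc, e_G2'H, mul_assoc, f1, mul_one]
    have f3 : G2' * H * G2 = H := by
      rw [e_G2'H, mul_assoc, f1, mul_one]
    have f4 : G2' * H * (H * G2) = 1 := by
      rw [e_G2'H, mul_assoc, f2, hH2]
    rw [hDH, hD]
    simp only [add_mul, mul_add, smul_mul_assoc, mul_smul_comm]
    rw [f1, f2, f3, f4, hlam]
    module
  set M := E * (U t)ᴴ * E * U t with hMdef
  have hT : (Et t)ᴴ * ((E * P0 * E) * Et t) = Mᴴ * (P0 * M) := by
    rw [hEt, hMdef]
    simp only [conjTranspose_mul, conjTranspose_conjTranspose, hEh]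
    simp only [mul_assoc]
  have hKH : P0 * Mᴴ * P0 = P0 * Dᴴ := by
    have h' := congrArg conjTranspose hK
    simp only [conjTranspose_mul, hP0herm] at h'
    rw [← mul_assoc] at h'
    exact h'
  have hBig : P0 * Mᴴ * P0 * M * P0 = lam • P0 := by
    have split : P0 * Mᴴ * P0 * M * P0 = (P0 * Mᴴ * P0) * (P0 * M * P0) := by
      rw [show (P0 * Mᴴ * P0) * (P0 * M * P0) = P0 * Mᴴ * (P0 * P0) * M * P0 by
        simp only [mul_assoc]]
      rw [hP0proj]
    rw [split, hKH, hK]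
    rw [show (P0 * Dᴴ) * (D * P0) = P0 * (Dᴴ * D) * P0 by simp only [mul_assoc], hDD,
      mul_smul_comm, mul_one, smul_mul_assoc, hP0proj]
  have hgoal1 : star (Et t *ᵥ ψ) ⬝ᵥ ((E * P0 * E) *ᵥ (Et t *ᵥ ψ))
      = star ψ ⬝ᵥ ((P0 * Mᴴ * P0 * M * P0) *ᵥ ψ) := by
    rw [Matrix.star_mulVec, Matrix.mulVec_mulVec, ← Matrix.dotProduct_mulVec,
      Matrix.mulVec_mulVec, hT]
    conv_lhs => rw [← hPψ]
    rw [Matrix.star_mulVec, hP0herm, ← Matrix.dotProduct_mulVec, Matrix.mulVec_mulVec,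
      Matrix.mulVec_mulVec]
    rw [show P0 * (Mᴴ * (P0 * M)) * P0 = P0 * Mᴴ * P0 * M * P0 by simp only [mul_assoc]]
  rw [hgoal1, hBig, Matrix.smul_mulVec, hPψ, dotProduct_smul, hψ, smul_eq_mul,
    mul_one]
  -- final scalar identity
  have h2α : 2 * ωH * t = α + α := by rw [hαdef]; ring
  have h2β : 2 * ω * t = β + β := by rw [hβdef]; ring
  rw [h2α, h2β, hlam, hp, hq, hp2]
  have hpy1 : ((Real.sin (α + α) : ℝ) : ℂ) ^ 2 + ((Real.cos (α + α) : ℝ) : ℂ) ^ 2 = 1 := by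
    exact_mod_cast Real.sin_sq_add_cos_sq (α + α)
  have hpy2 : ((Real.sin (β + β) : ℝ) : ℂ) ^ 2 + ((Real.cos (β + β) : ℝ) : ℂ) ^ 2 = 1 := by
    exact_mod_cast Real.sin_sq_add_cos_sq (β + β)
  have hI : Complex.I ^ 2 = -1 := Complex.I_sq
  simp only [Complex.ofReal_sub, Complex.ofReal_one, Complex.ofReal_mul, Complex.ofReal_pow]
  linear_combination (-(((Real.sin (α + α) : ℝ) : ℂ) ^ 2 * ((Real.cos (β + β) : ℝ) : ℂ) ^ 2)) * hI
    + ((Real.sin (α + α) : ℝ) : ℂ) ^ 2 * hpy2 + hpy1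
end

section
/- (Projected component in the EX-syndrome space, class-1 case.) Let E be a Hermitian N×N matrix with E² = I, E·H = −H·E and E·X = X·E, and let ψ̄ be a unit vector with P0·ψ̄ = ψ̄. Then for all t, (E·X·P0·X·E)·E(t)·ψ̄ = sin(2ω_H t)·sin(2ωt)·E·X·H·ψ̄, where E(t) = U(t)†·E·U(t); i.e., the component of the rotated error state in the EX-syndrome space carries the fixed logical rotation exp(i(π/2)H) = iH. -/
open Matrix

section Aux

variable {N : ℕ}

/-- `Fm A r = cos r • 1 + (sin r * I) • A`, the closed form of `exp ((I r) • A)` for an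
involution `A`. -/
noncomputable def Fm (A : Matrix (Fin N) (Fin N) ℂ) (r : ℝ) : Matrix (Fin N) (Fin N) ℂ :=
  (Real.cos r : ℂ) • 1 + ((Real.sin r : ℂ) * Complex.I) • A

lemma exp_invol (A : Matrix (Fin N) (Fin N) ℂ) (hA : A * A = 1) (r : ℝ) :
    NormedSpace.exp ((Complex.I * (r : ℂ)) • A) = Fm A r := by
  rw [NormedSpace.exp_eq_tsum ℂ]
  refine HasSum.tsum_eq ?_
  have hA2 : A ^ 2 = 1 := by rw [sq, hA]
  have heven : ∀ k : ℕ, A ^ (2 * k) = 1 := fun k => by rw [pow_mul, hA2, one_pow]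
  have hodd : ∀ k : ℕ, A ^ (2 * k + 1) = A := fun k => by rw [pow_succ, heven, one_mul]
  refine HasSum.even_add_odd
    (f := fun n => ((Nat.factorial n : ℂ)⁻¹) • ((Complex.I * (r : ℂ)) • A) ^ n) ?_ ?_
  · have h := (Complex.hasSum_cos (r : ℂ)).smul_const (1 : Matrix (Fin N) (Fin N) ℂ)
    rw [← Complex.ofReal_cos] at h
    convert h using 2 with k
    rw [smul_pow, heven, smul_smul, mul_pow, pow_mul, Complex.I_sq]
    congr 1
    ring
  · have h := ((Complex.hasSum_sin (r : ℂ)).mul_right Complex.I).smul_const A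
    rw [← Complex.ofReal_sin] at h
    convert h using 2 with k
    rw [smul_pow, hodd, smul_smul]
    congr 1
    rw [mul_pow, pow_succ, pow_succ, pow_mul, pow_mul, Complex.I_sq]
    ring

lemma Fm_conjTranspose (A : Matrix (Fin N) (Fin N) ℂ) (hA : Aᴴ = A) (r : ℝ) :
    (Fm A r)ᴴ = Fm A (-r) := by
  simp only [Fm, conjTranspose_add, conjTranspose_smul, conjTranspose_one, hA,
    Real.cos_neg, Real.sin_neg, Complex.ofReal_neg, neg_mul, neg_smul, star_mul',
    Complex.star_def, Complex.conj_ofReal, Complex.conj_I, mul_neg]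

lemma core (H X P0 E : Matrix (Fin N) (Fin N) ℂ)
    (hH2 : H * H = 1) (hX2 : X * X = 1) (hHX : H * X = -(X * H))
    (hP0proj : P0 * P0 = P0) (hP0H : P0 * H = H * P0)
    (hPXP : P0 * X * P0 = 0) (hPHXP : P0 * H * X * P0 = 0)
    (hE2 : E * E = 1) (hEH : E * H = -(H * E)) (hEX : E * X = X * E)
    (a b c : ℝ) :
    E * X * P0 * X * E * (Fm H a * Fm X (-b) * Fm H (-c) * E * (Fm H c * Fm X b * Fm H (-a))) * P0
      = ((Real.sin (2 * c) * Real.sin (2 * b) : ℝ) : ℂ) • (E * X * H * P0) := by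
  have rXX : ∀ D, X * (X * D) = D := fun D => by rw [← Matrix.mul_assoc, hX2, one_mul]
  have rHH : ∀ D, H * (H * D) = D := fun D => by rw [← Matrix.mul_assoc, hH2, one_mul]
  have rEE : ∀ D, E * (E * D) = D := fun D => by rw [← Matrix.mul_assoc, hE2, one_mul]
  have rHX : ∀ D, H * (X * D) = -(X * (H * D)) := fun D => by
    rw [← Matrix.mul_assoc, hHX, neg_mul, Matrix.mul_assoc]
  have rEX : ∀ D, E * (X * D) = X * (E * D) := fun D => by
    rw [← Matrix.mul_assoc, hEX, Matrix.mul_assoc]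
  have rEH : ∀ D, E * (H * D) = -(H * (E * D)) := fun D => by
    rw [← Matrix.mul_assoc, hEH, neg_mul, Matrix.mul_assoc]
  have hXH : X * H = -(H * X) := by rw [hHX, neg_neg]
  have rPXP : P0 * (X * P0) = 0 := by rw [← Matrix.mul_assoc, hPXP]
  have rPXHP : P0 * (X * (H * P0)) = 0 := by
    rw [← Matrix.mul_assoc, ← Matrix.mul_assoc, Matrix.mul_assoc P0 X H, hXH, mul_neg, neg_mul,
      Matrix.mul_assoc, ← Matrix.mul_assoc, ← Matrix.mul_assoc, hPHXP, neg_zero]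
  have rPHP : P0 * (H * P0) = H * P0 := by
    rw [← Matrix.mul_assoc, hP0H, Matrix.mul_assoc, hP0proj]
  simp only [Fm, Matrix.mul_assoc, mul_add, add_mul, smul_mul_assoc, Matrix.mul_smul,
    Matrix.smul_mul, mul_smul_comm, smul_smul, one_mul, mul_one, mul_neg, neg_mul, smul_neg,
    neg_neg, rEE, rEX, rEH, rXX, rHH, rHX, rPXP, rPXHP, rPHP, hP0proj, mul_zero, zero_mul,
    smul_zero, add_zero, zero_add, smul_add, neg_add_rev]
  match_scalars
  all_goals try simp only [Complex.cos_neg, Complex.sin_neg, Complex.sin_two_mul]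
  all_goals try ring_nf
  all_goals try simp only [Complex.I_sq, Complex.I_pow_four, Complex.sin_sq]
  all_goals try ring_nf

end Aux

/-- Projected component in the `EX`-syndrome space: with `E` Hermitian, `E² = 1`,
`{E,H} = 0`, `[E,X] = 0`, and `ψ̄` a unit code vector,
`(E·X·P0·X·E)·E(t)·ψ̄ = sin(2ω_H t)·sin(2ωt)·E·X·H·ψ̄` for all `t`. -/
theorem projected_component_EX {N : ℕ} (hN : 0 < N)
    (H X : Matrix (Fin N) (Fin N) ℂ)
    (hHh : Hᴴ = H) (hXh : Xᴴ = X)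
    (hH2 : H * H = 1) (hX2 : X * X = 1) (hHX : H * X = -(X * H))
    (ω θ ωH : ℝ) (hω : 0 < ω) (hωH : ωH = θ * ω / (2 * Real.pi))
    (θbar : ℝ → ℝ) (hθbar : ∀ t, θbar t = θ / (4 * Real.pi) * Real.sin (2 * ω * t))
    (V U : ℝ → Matrix (Fin N) (Fin N) ℂ)
    (hV : ∀ t : ℝ, V t = NormedSpace.exp ((Complex.I * (ωH * t)) • H) *
      NormedSpace.exp ((Complex.I * (ω * t)) • X))
    (hU : ∀ t : ℝ, U t = V t * NormedSpace.exp ((-(Complex.I * (θbar t : ℝ))) • H))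
    (P0 : Matrix (Fin N) (Fin N) ℂ)
    (hP0proj : P0 * P0 = P0) (hP0herm : P0ᴴ = P0)
    (hP0H : P0 * H = H * P0) (hPXP : P0 * X * P0 = 0) (hPHXP : P0 * H * X * P0 = 0)
    (E : Matrix (Fin N) (Fin N) ℂ)
    (hEh : Eᴴ = E) (hE2 : E * E = 1)
    (hEH : E * H = -(H * E)) (hEX : E * X = X * E)
    (Et : ℝ → Matrix (Fin N) (Fin N) ℂ)
    (hEt : ∀ t : ℝ, Et t = (U t)ᴴ * E * U t)
    (ψ : Fin N → ℂ) (hψ : star ψ ⬝ᵥ ψ = 1) (hPψ : P0 *ᵥ ψ = ψ) :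
    ∀ t : ℝ,
      (E * X * P0 * X * E) *ᵥ (Et t *ᵥ ψ)
        = ((Real.sin (2 * ωH * t) * Real.sin (2 * ω * t) : ℝ) : ℂ) •
            ((E * X * H) *ᵥ ψ) := by
  intro t
  have hUt : U t = Fm H (ωH * t) * Fm X (ω * t) * Fm H (-(θbar t)) := by
    rw [hU t, hV t,
      show (Complex.I * (ωH * t)) • H = (Complex.I * ((ωH * t : ℝ) : ℂ)) • H by push_cast; ring_nf,
      show (Complex.I * (ω * t)) • X = (Complex.I * ((ω * t : ℝ) : ℂ)) • X by push_cast; ring_nf,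
      show (-(Complex.I * ((θbar t : ℝ) : ℂ))) • H
          = (Complex.I * ((-(θbar t) : ℝ) : ℂ)) • H by push_cast; ring_nf,
      exp_invol H hH2, exp_invol X hX2, exp_invol H hH2]
  have hUc : (U t)ᴴ = Fm H (θbar t) * Fm X (-(ω * t)) * Fm H (-(ωH * t)) := by
    rw [hUt]
    simp only [conjTranspose_mul, Fm_conjTranspose H hHh, Fm_conjTranspose X hXh, neg_neg,
      ← Matrix.mul_assoc]
  have hmat : (E * X * P0 * X * E) * ((U t)ᴴ * E * U t) * P0
      = ((Real.sin (2 * ωH * t) * Real.sin (2 * ω * t) : ℝ) : ℂ) • (E * X * H * P0) := by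
    rw [hUc, hUt, show (2 : ℝ) * ωH * t = 2 * (ωH * t) by ring,
      show (2 : ℝ) * ω * t = 2 * (ω * t) by ring]
    exact core H X P0 E hH2 hX2 hHX hP0proj hP0H hPXP hPHXP hE2 hEH hEX (θbar t) (ω * t) (ωH * t)
  calc (E * X * P0 * X * E) *ᵥ (Et t *ᵥ ψ)
      = ((E * X * P0 * X * E) * ((U t)ᴴ * E * U t) * P0) *ᵥ ψ := by
        conv_lhs => rw [hEt t, mulVec_mulVec, ← hPψ, mulVec_mulVec]
    _ = (((Real.sin (2 * ωH * t) * Real.sin (2 * ω * t) : ℝ) : ℂ) • (E * X * H * P0)) *ᵥ ψ := by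
        rw [hmat]
    _ = ((Real.sin (2 * ωH * t) * Real.sin (2 * ω * t) : ℝ) : ℂ) • ((E * X * H) *ᵥ ψ) := by
        rw [smul_mulVec, ← mulVec_mulVec, hPψ]
end
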